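/- Measured hockey-stick divergence is dominated by the quantum hockey-stick divergence (Lemma 2): Let n be a nonempty finite type, let ρ, ρ' : Matrix n n ℂ be density matrices, let γ ≥ 1 be real, and let E : Fin m → Matrix n n ℂ be a POVM. Then ∑_{i : Fin m} max(0, Re(Tr(E i * ρ)) - γ * Re(Tr(E i * ρ'))) ≤ Re(Tr((ρ - γ • ρ')₊)), i.e. the hockey-stick divergence of the two measurement-outcome probability distributions is upper-bounded by the quantum hockey-stick divergence D_γ^q(ρ‖ρ') := Re(Tr((ρ - γ • ρ')₊)). -/

import Mathlib

open Matrix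
open scoped ComplexOrder

/-- The positive part of a matrix, given by the continuous functional calculus
applied to `fun x => max x 0` (for a Hermitian matrix this replaces each
eigenvalue `x` in the spectral decomposition by `max x 0`). -/
noncomputable def matPosPart {n : Type*} [Fintype n] [DecidableEq n]
    (A : Matrix n n ℂ) : Matrix n n ℂ :=
  cfc (fun x : ℝ => max x 0) A

lemma posSemidef_cfc {n : Type*} [Fintype n] [DecidableEq n] {A : Matrix n n ℂ}
    (hA : A.IsHermitian) (f : ℝ → ℝ) (hf : ∀ x, 0 ≤ f x) : (cfc f A).PosSemidef := by
  rw [hA.cfc_eq, Matrix.IsHermitian.cfc]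
  have hd : (Matrix.diagonal ((RCLike.ofReal : ℝ → ℂ) ∘ f ∘ hA.eigenvalues)).PosSemidef := by
    rw [Matrix.posSemidef_diagonal_iff]
    intro i
    simpa using hf (hA.eigenvalues i)
  simpa [Matrix.star_eq_conjTranspose] using
    hd.mul_mul_conjTranspose_same (hA.eigenvectorUnitary : Matrix n n ℂ)

lemma trace_re_nonneg_of_posSemidef {n : Type*} [Fintype n] [DecidableEq n] {A : Matrix n n ℂ}
    (hA : A.PosSemidef) : 0 ≤ A.trace.re := by
  rw [Matrix.trace]
  rw [Complex.re_sum]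
  refine Finset.sum_nonneg fun i _ => ?_
  have := hA.re_dotProduct_nonneg (Pi.single i 1)
  simpa [Matrix.diag, dotProduct, Matrix.mulVec, Pi.single_apply,
    Finset.mul_sum, mul_ite] using this

lemma trace_mul_re_nonneg {n : Type*} [Fintype n] [DecidableEq n] {A B : Matrix n n ℂ}
    (hA : A.PosSemidef) (hB : B.PosSemidef) : 0 ≤ (A * B).trace.re := by
  obtain ⟨C, rfl⟩ : ∃ C : Matrix n n ℂ, A = Cᴴ * C := by
    open scoped MatrixOrder in exact CStarAlgebra.nonneg_iff_eq_star_mul_self.mp hA.nonneg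
  rw [Matrix.mul_assoc, Matrix.trace_mul_comm]
  exact trace_re_nonneg_of_posSemidef (hB.mul_mul_conjTranspose_same C)

/-- Lemma 2: the hockey-stick divergence of the outcome distributions of a POVM
measurement on two density matrices is bounded by the quantum hockey-stick
divergence. -/
theorem measured_hockeyStick_le_quantum_hockeyStick
    {n : Type*} [Fintype n] [DecidableEq n] [Nonempty n] {m : ℕ}
    (ρ ρ' : Matrix n n ℂ)
    (hρ : ρ.IsHermitian) (hρpsd : ρ.PosSemidef) (hρtr : ρ.trace = 1)
    (hρ' : ρ'.IsHermitian) (hρ'psd : ρ'.PosSemidef) (hρ'tr : ρ'.trace = 1)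
    (γ : ℝ) (hγ : 1 ≤ γ)
    (E : Fin m → Matrix n n ℂ) (hE : ∀ i, (E i).PosSemidef)
    (hEsum : ∑ i, E i = 1) :
    ∑ i, max 0 ((E i * ρ).trace.re - γ * (E i * ρ').trace.re)
      ≤ (matPosPart (ρ - γ • ρ')).trace.re := by
  set Δ : Matrix n n ℂ := ρ - γ • ρ' with hΔdef
  have hΔ : Δ.IsHermitian := by
    unfold Matrix.IsHermitian
    rw [hΔdef]
    ext i j
    simp [Matrix.conjTranspose_apply, hρ.apply, hρ'.apply, ← Complex.ofReal_mul]
  have hΔsa : IsSelfAdjoint Δ := hΔ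
  set P : Matrix n n ℂ := matPosPart Δ with hPdef
  have hP : P.PosSemidef := posSemidef_cfc hΔ _ fun x => le_max_right x 0
  have hPsub : (P - Δ).PosSemidef := by
    have h1 : cfc (fun x : ℝ => max x 0 - x) Δ = P - Δ := by
      rw [cfc_sub (fun x : ℝ => max x 0) (fun x : ℝ => x) Δ, cfc_id' ℝ Δ, hPdef, matPosPart]
    rw [← h1]
    exact posSemidef_cfc hΔ _ fun x => by simp [sub_nonneg, le_max_left]
  have key : ∀ i, max 0 ((E i * ρ).trace.re - γ * (E i * ρ').trace.re)
      ≤ (E i * P).trace.re := by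
    intro i
    have ht : (E i * Δ).trace.re = (E i * ρ).trace.re - γ * (E i * ρ').trace.re := by
      rw [hΔdef, Matrix.mul_sub, Matrix.trace_sub, Matrix.mul_smul, Matrix.trace_smul]
      simp [Complex.smul_re]
    have h1 : 0 ≤ (E i * P).trace.re := trace_mul_re_nonneg (hE i) hP
    have h2 : 0 ≤ (E i * (P - Δ)).trace.re := trace_mul_re_nonneg (hE i) hPsub
    have h3 : (E i * (P - Δ)).trace.re = (E i * P).trace.re - (E i * Δ).trace.re := by
      rw [Matrix.mul_sub, Matrix.trace_sub]
      simp
    rw [← ht]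
    rw [h3] at h2
    exact max_le h1 (by linarith)
  calc ∑ i, max 0 ((E i * ρ).trace.re - γ * (E i * ρ').trace.re)
      ≤ ∑ i, (E i * P).trace.re := Finset.sum_le_sum fun i _ => key i
    _ = ((∑ i, E i) * P).trace.re := by
        rw [Finset.sum_mul, Matrix.trace_sum, Complex.re_sum]
    _ = P.trace.re := by rw [hEsum, one_mul]
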